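/- Let $G$ be a finite subgroup of $\mathrm{GL}(L)$ for a lattice $L \cong \mathbb{Z}^n$, and let $D$ be the subgroup of $G$ generated by the diagonalizable reflections in $G$. Then $D$ is a normal subgroup of $G$ and $D$ is an elementary abelian $2$-group of rank equal to the number of diagonalizable reflections in $G$. -/

import Mathlib

open Matrix

/-- The diagonal matrix `diag(-1,1,…,1)`. -/
noncomputable def diagReflMat (n : ℕ) : Matrix (Fin n) (Fin n) ℤ :=
  Matrix.diagonal fun i => if (i : ℕ) = 0 then -1 else 1

/-- `x ∈ GLₙ(ℤ)` is a diagonalizable reflection: `1 - x` has rank `1` and `x` is conjugate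
in `GLₙ(ℤ)` to `diag(-1,1,…,1)`. -/
noncomputable def IsDiagRefl (n : ℕ) (x : GL (Fin n) ℤ) : Prop :=
  Matrix.rank ((1 : Matrix (Fin n) (Fin n) ℤ) - (x : Matrix (Fin n) (Fin n) ℤ)) = 1 ∧
  ∃ t : GL (Fin n) ℤ,
    ((t * x * t⁻¹ : GL (Fin n) ℤ) : Matrix (Fin n) (Fin n) ℤ) = diagReflMat n

variable {n : ℕ}

abbrev R (n : ℕ) := Matrix (Fin n) (Fin n) ℤ

lemma bin_expand (m : ℕ) (x : R n) : ∃ S : R n, (1 + x) ^ m = 1 + (m : ℤ) • x + x ^ 2 * S := by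
  induction m with
  | zero => exact ⟨0, by simp⟩
  | succ m ih =>
    obtain ⟨S, hS⟩ := ih
    refine ⟨(m : ℤ) • 1 + S + S * x, ?_⟩
    rw [pow_succ, hS]
    push_cast
    rw [add_smul, one_smul]
    noncomm_ring

lemma prime_step (p : ℕ) (hp : p.Prime) (k : ℕ) (hk : 2 ≤ k) (B : R n)
    (h : (1 + ((2:ℤ)^k) • B) ^ p = 1) : ∃ C : R n, B = (2:ℤ) • C := by
  obtain ⟨S, hS⟩ := bin_expand p (((2:ℤ)^k) • B)
  rw [h, add_assoc] at hS
  have h2 : (p : ℤ) • (((2:ℤ)^k) • B) + (((2:ℤ)^k) • B) ^ 2 * S = 0 :=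
    add_eq_left.mp hS.symm
  rw [smul_pow, smul_mul_assoc, smul_smul] at h2
  obtain ⟨k', rfl⟩ : ∃ k', k = 2 + k' := ⟨k - 2, by omega⟩
  have key : ∀ i j, 2 ∣ B i j := by
    intro i j
    have h3 := congrFun (congrFun h2 i) j
    simp only [Matrix.add_apply, Matrix.smul_apply, smul_eq_mul, Matrix.zero_apply] at h3
    set W := (B ^ 2 * S) i j with hW
    have hc : (2:ℤ) ^ (2 + k') ≠ 0 := by positivity
    have h4 : (p : ℤ) * B i j = -(4 * 2 ^ k' * W) := by
      apply mul_left_cancel₀ hc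
      linear_combination h3
    rcases hp.eq_two_or_odd' with hp2 | hodd
    · subst hp2
      push_cast at h4
      exact ⟨-(2 ^ k' * W), by linarith⟩
    · have hdvd : (2:ℤ) ∣ (p : ℤ) * B i j := ⟨-(2 * 2 ^ k' * W), by linarith⟩
      rcases Int.prime_two.dvd_or_dvd hdvd with h5 | h5
      · exfalso
        have h6 : (2:ℕ) ∣ p := by exact_mod_cast h5
        have h7 : p % 2 = 1 := Nat.odd_iff.mp hodd
        omega
      · exact h5
  refine ⟨Matrix.of fun i j => B i j / 2, ?_⟩
  ext i j
  simp only [Matrix.smul_apply, Matrix.of_apply, smul_eq_mul]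
  exact (Int.mul_ediv_cancel' (key i j)).symm

lemma pow_mod4 (B : R n) (m : ℕ) : ∃ B' : R n, (1 + (4:ℤ)•B)^m = 1 + (4:ℤ)•B' := by
  obtain ⟨S, hS⟩ := bin_expand m ((4:ℤ)•B)
  refine ⟨(m:ℤ)•B + (4:ℤ)•(B^2*S), ?_⟩
  rw [hS, smul_pow, smul_mul_assoc]
  module

lemma prime_order_trivial (p : ℕ) (hp : p.Prime) (B : R n)
    (h : (1 + (4:ℤ)•B)^p = 1) : (1 : R n) + (4:ℤ)•B = 1 := by
  have H : ∀ j : ℕ, ∃ C : R n, 1 + (4:ℤ)•B = 1 + ((2:ℤ)^(j+2))•C := by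
    intro j
    induction j with
    | zero => exact ⟨B, by norm_num⟩
    | succ j ih =>
      obtain ⟨C, hC⟩ := ih
      have h' : (1 + ((2:ℤ)^(j+2))•C)^p = 1 := by rw [← hC]; exact h
      obtain ⟨C', hC'⟩ := prime_step p hp (j+2) (by omega) C h'
      refine ⟨C', ?_⟩
      rw [hC, hC', smul_smul]
      ring_nf
  have key : ∀ i j, (4:ℤ) * B i j = 0 := by
    intro i j
    by_contra hne
    set a := (4:ℤ) * B i j with ha
    have hdvd : ∀ m : ℕ, (2:ℤ)^(m+2) ∣ a := by
      intro m
      obtain ⟨C, hC⟩ := H m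
      have := congrFun (congrFun hC i) j
      simp only [Matrix.add_apply, Matrix.smul_apply, smul_eq_mul] at this
      exact ⟨C i j, by linarith⟩
    have h1 : (2:ℤ)^(a.natAbs+2) ≤ |a| := by
      apply Int.le_of_dvd (abs_pos.mpr hne)
      exact ((hdvd a.natAbs).trans (dvd_abs a a |>.mpr dvd_rfl))
    have h2 : |a| = (a.natAbs : ℤ) := Int.abs_eq_natAbs a
    have h3 : a.natAbs < 2^(a.natAbs + 2) := by
      calc a.natAbs < 2^(a.natAbs) := Nat.lt_two_pow_self
      _ ≤ 2^(a.natAbs+2) := Nat.pow_le_pow_right (by norm_num) (by omega)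
    rw [h2] at h1
    have h4 : ((2:ℤ))^(a.natAbs+2) = ((2^(a.natAbs+2) : ℕ) : ℤ) := by push_cast; ring
    rw [h4] at h1
    exact absurd (Int.ofNat_le.mp h1) (by omega)
  have hz : (4:ℤ) • B = (0 : R n) := by
    ext i j
    simpa using key i j
  rw [hz, add_zero]

lemma mod4_finite_order (N : ℕ) : ∀ B : R n, 0 < N → (1 + (4:ℤ)•B)^N = 1 →
    (1 : R n) + (4:ℤ)•B = 1 := by
  induction N using Nat.strong_induction_on with
  | _ N ih =>
    intro B hN h
    rcases eq_or_ne N 1 with rfl | hN1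
    · rwa [pow_one] at h
    · set p := N.minFac with hp'
      have hp : p.Prime := Nat.minFac_prime hN1
      obtain ⟨B', hB'⟩ := pow_mod4 B (N / p)
      have hdvd : p ∣ N := Nat.minFac_dvd N
      have hpow : (1 + (4:ℤ)•B')^p = 1 := by
        rw [← hB', ← pow_mul, Nat.div_mul_cancel hdvd, h]
      have := prime_order_trivial p hp B' hpow
      have hNp : (1 + (4:ℤ)•B)^(N/p) = 1 := by rw [hB', this]
      exact ih (N / p) (Nat.div_lt_self hN hp.one_lt)
        B (Nat.div_pos (Nat.minFac_le hN) hp.pos) hNp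


lemma isDiagRefl_pos {x : GL (Fin n) ℤ} (h : IsDiagRefl n x) : 0 < n := by
  by_contra hn
  have hn0 : n = 0 := by omega
  subst hn0
  have h0 : (1 - (x : R 0)) = 0 := Subsingleton.elim _ _
  have h1 := h.1
  rw [h0, Matrix.rank_zero] at h1
  omega

noncomputable def Emat (n : ℕ) (hn : 0 < n) : R n := Matrix.single ⟨0, hn⟩ ⟨0, hn⟩ 1

lemma Emat_mul_mul (hn : 0 < n) (A : R n) :
    Emat n hn * A * Emat n hn = (A ⟨0, hn⟩ ⟨0, hn⟩) • Emat n hn := by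
  ext i j
  rcases eq_or_ne i ⟨0, hn⟩ with rfl | hi
  · rcases eq_or_ne j ⟨0, hn⟩ with rfl | hj
    · simp [Emat, mul_comm]
    · simp [Emat, hj, Ne.symm hj]
  · simp [Emat, Matrix.mul_assoc, hi, Ne.symm hi]

lemma Emat_mul_self (hn : 0 < n) : Emat n hn * Emat n hn = Emat n hn := by
  simp [Emat]

lemma Emat_trace (hn : 0 < n) : (Emat n hn).trace = 1 := by
  simp [Emat]

lemma Emat_trace_mul (hn : 0 < n) (A : R n) :
    (Emat n hn * A).trace = A ⟨0, hn⟩ ⟨0, hn⟩ := by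
  rw [Matrix.trace]
  rw [Finset.sum_eq_single ⟨0, hn⟩]
  · simp [Emat, Matrix.diag]
  · intro b _ hb
    simp [Matrix.diag, Emat, hb, Ne.symm hb]
  · simp

lemma diagReflMat_eq (hn : 0 < n) : diagReflMat n = 1 - (2:ℤ) • Emat n hn := by
  ext i j
  rcases eq_or_ne i j with rfl | hij
  · rcases eq_or_ne i ⟨0, hn⟩ with rfl | hi
    · simp [diagReflMat, Emat]
    · have h0 : (i : ℕ) ≠ 0 := fun hh => hi (by ext; exact hh)
      simp [diagReflMat, Emat, h0, Matrix.single_apply_of_row_ne (Ne.symm hi)]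
  · simp only [diagReflMat, Matrix.diagonal_apply_ne _ hij, Matrix.sub_apply,
      Matrix.one_apply_ne hij, Matrix.smul_apply, Emat, smul_eq_mul, mul_one]
    rw [Matrix.single_apply_of_ne]
    · ring
    · rintro ⟨h1, h2⟩
      exact hij (h1.symm.trans h2)

lemma diagRefl_struct {x : GL (Fin n) ℤ} (h : IsDiagRefl n x) :
    ∃ Q : R n, Q * Q = Q ∧ Q.trace = 1 ∧ (x : R n) = 1 - (2:ℤ) • Q ∧
      (∀ X : R n, Q * X * Q = (Q * X).trace • Q) ∧ x * x = 1 := by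
  have hn := isDiagRefl_pos h
  obtain ⟨t, ht⟩ := h.2
  set T : R n := (t : R n) with hT
  set T' : R n := ((t⁻¹ : GL (Fin n) ℤ) : R n) with hT'
  have hTT' : T * T' = 1 := t.mul_inv
  have hT'T : T' * T = 1 := t.inv_mul
  have ht2 : T * (x : R n) * T' = diagReflMat n := by
    rw [hT, hT', ← Units.val_mul, ← Units.val_mul]; exact ht
  have hx : (x : R n) = T' * diagReflMat n * T := by
    rw [← ht2]
    calc (x : R n) = (T' * T) * (x : R n) * (T' * T) := by rw [hT'T]; noncomm_ring
    _ = T' * (T * (x:R n) * T') * T := by noncomm_ring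
  set E := Emat n hn with hE
  refine ⟨T' * E * T, ?_, ?_, ?_, ?_, ?_⟩
  · calc T' * E * T * (T' * E * T) = T' * (E * (T * T') * E) * T := by noncomm_ring
    _ = T' * E * T := by rw [hTT', mul_one, Emat_mul_self hn]
  · have e0 : (T' * E * T).trace = (E * T * T').trace := by
      rw [Matrix.mul_assoc, Matrix.trace_mul_comm, Matrix.mul_assoc]
    rw [e0, Matrix.mul_assoc, hTT', mul_one, Emat_trace hn]
  · rw [hx, diagReflMat_eq hn, ← hE, mul_sub, mul_one, sub_mul, hT'T, mul_smul_comm,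
      smul_mul_assoc, Matrix.mul_assoc]
  · intro X
    have e1 : T' * E * T * X * (T' * E * T) = T' * (E * (T * X * T') * E) * T := by
      noncomm_ring
    have e2 : (T' * E * T * X).trace = (E * (T * X * T')).trace := by
      have e3 : T' * E * T * X = T' * (E * (T * X)) := by noncomm_ring
      rw [e3, Matrix.trace_mul_comm]
      congr 1
      noncomm_ring
    rw [e1, e2, Emat_mul_mul hn, Emat_trace_mul hn, mul_smul_comm, smul_mul_assoc, ← hE,
      Matrix.mul_assoc]
  · have hDD : diagReflMat n * diagReflMat n = 1 := by
      rw [diagReflMat_eq hn]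
      simp only [sub_mul, mul_sub, one_mul, mul_one, smul_mul_assoc, mul_smul_comm,
        smul_smul, Emat_mul_self hn]
      module
    have hxx : (x : R n) * (x : R n) = 1 := by
      rw [hx]
      calc T' * diagReflMat n * T * (T' * diagReflMat n * T)
          = T' * (diagReflMat n * (T * T') * diagReflMat n) * T := by noncomm_ring
      _ = 1 := by rw [hTT', mul_one, hDD, mul_one, hT'T]
    ext1
    rw [Units.val_mul, Units.val_one]
    exact hxx

lemma Q_unique {x : GL (Fin n) ℤ} {Q Q' : R n} (h1 : (x : R n) = 1 - (2:ℤ) • Q)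
    (h2 : (x : R n) = 1 - (2:ℤ) • Q') : Q = Q' := by
  have h3 : (2:ℤ) • Q = (2:ℤ) • Q' := by
    have := h1.symm.trans h2
    ext i j
    have := congrFun (congrFun this i) j
    simp only [Matrix.sub_apply, Matrix.smul_apply, smul_eq_mul, Matrix.one_apply] at this ⊢
    linarith
  ext i j
  have := congrFun (congrFun h3 i) j
  simp only [Matrix.smul_apply, smul_eq_mul] at this
  linarith

lemma isDiagRefl_conj {x : GL (Fin n) ℤ} (g : GL (Fin n) ℤ) (h : IsDiagRefl n x) :
    IsDiagRefl n (g * x * g⁻¹) := by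
  constructor
  · have e1 : (1 : R n) - ((g * x * g⁻¹ : GL (Fin n) ℤ) : R n)
        = (g : R n) * ((1 : R n) - (x : R n)) * ((g⁻¹ : GL (Fin n) ℤ) : R n) := by
      rw [Units.val_mul, Units.val_mul, mul_sub, sub_mul, mul_one]
      rw [show ((g : R n) * ((g⁻¹ : GL (Fin n) ℤ) : R n)) = 1 from g.mul_inv]
    rw [e1]
    rw [Matrix.rank_mul_eq_left_of_isUnit_det _ _
      (Matrix.isUnit_iff_isUnit_det _ |>.mp (g⁻¹).isUnit),
      Matrix.rank_mul_eq_right_of_isUnit_det _ _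
      (Matrix.isUnit_iff_isUnit_det _ |>.mp g.isUnit)]
    exact h.1
  · obtain ⟨t, ht⟩ := h.2
    refine ⟨t * g⁻¹, ?_⟩
    have : t * g⁻¹ * (g * x * g⁻¹) * (t * g⁻¹)⁻¹ = t * x * t⁻¹ := by group
    rw [this, ht]

lemma diagRefl_commute {x y : GL (Fin n) ℤ} (hx : IsDiagRefl n x) (hy : IsDiagRefl n y)
    (N : ℕ) (hN : 0 < N) (hfin : (x * y) ^ N = 1) : x * y = y * x := by
  obtain ⟨Qx, hQx1, _, hQx3, _, hxx⟩ := diagRefl_struct hx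
  obtain ⟨Qy, hQy1, _, hQy3, _, hyy⟩ := diagRefl_struct hy
  -- the matrix of x*y is 1 + 2•A
  set A : R n := (2:ℤ) • (Qx * Qy) - Qx - Qy with hA
  have hm : ((x * y : GL (Fin n) ℤ) : R n) = 1 + (2:ℤ) • A := by
    rw [Units.val_mul, hQx3, hQy3, hA]
    simp only [sub_mul, mul_sub, one_mul, mul_one, smul_mul_assoc, mul_smul_comm, smul_smul]
    module
  have hm2 : ((x * y : GL (Fin n) ℤ) : R n) * ((x * y : GL (Fin n) ℤ) : R n)
      = 1 + (4:ℤ) • (A + A * A) := by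
    rw [hm]
    simp only [add_mul, mul_add, one_mul, mul_one, smul_mul_assoc, mul_smul_comm, smul_smul]
    module
  have hpow : (1 + (4:ℤ) • (A + A * A)) ^ N = 1 := by
    rw [← hm2, ← sq, ← pow_mul]
    have h5 : (x * y) ^ (2 * N) = 1 := by rw [pow_mul', hfin, one_pow]
    rw [← Units.val_pow_eq_pow_val, h5, Units.val_one]
  have h1 := mod4_finite_order N (A + A * A) hN hpow
  have hsq : ((x * y : GL (Fin n) ℤ) : R n) * ((x * y : GL (Fin n) ℤ) : R n) = 1 := by
    rw [hm2]
    rw [show (1 : R n) + (4:ℤ) • (A + A * A) = 1 from h1]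
  have hsqGL : (x * y) * (x * y) = 1 := by
    ext1
    rw [Units.val_mul, Units.val_one]
    exact hsq
  -- x y x y = 1 and x x = 1, y y = 1 imply commuting
  have hxinv : x⁻¹ = x := inv_eq_of_mul_eq_one_right hxx
  have hyinv : y⁻¹ = y := inv_eq_of_mul_eq_one_right hyy
  have : x * y = (x * y)⁻¹ := (inv_eq_of_mul_eq_one_right hsqGL).symm
  rw [_root_.mul_inv_rev, hxinv, hyinv] at this
  exact this

lemma diagRefl_orth {x y : GL (Fin n) ℤ} {Qx Qy : R n}
    (hQx1 : Qx * Qx = Qx) (hQx3 : (x : R n) = 1 - (2:ℤ) • Qx)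
    (hQx4 : ∀ X : R n, Qx * X * Qx = (Qx * X).trace • Qx)
    (hQy1 : Qy * Qy = Qy) (hQy3 : (y : R n) = 1 - (2:ℤ) • Qy)
    (hQy4 : ∀ X : R n, Qy * X * Qy = (Qy * X).trace • Qy)
    (hne : x ≠ y) (hcomm : x * y = y * x) : Qx * Qy = 0 := by
  have hmat : (x : R n) * (y : R n) = (y : R n) * (x : R n) := by
    rw [← Units.val_mul, ← Units.val_mul, hcomm]
  have hQcomm : Qx * Qy = Qy * Qx := by
    rw [hQx3, hQy3] at hmat
    simp only [sub_mul, mul_sub, one_mul, mul_one, smul_mul_assoc, mul_smul_comm,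
      smul_smul] at hmat
    have h4 : ((2:ℤ)*2) • (Qx * Qy) = ((2:ℤ)*2) • (Qy * Qx) := by
      ext i j
      have := congrFun (congrFun hmat i) j
      simp only [Matrix.sub_apply, Matrix.smul_apply, Matrix.add_apply, smul_eq_mul] at this ⊢
      linarith
    ext i j
    have := congrFun (congrFun h4 i) j
    simp only [Matrix.smul_apply, smul_eq_mul] at this
    linarith
  set c := (Qx * Qy).trace with hc
  have e1 : Qx * Qy = c • Qx := by
    have := hQx4 Qy
    rw [show Qx * Qy * Qx = Qx * Qy from by
      rw [Matrix.mul_assoc, ← hQcomm, ← Matrix.mul_assoc, hQx1]] at this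
    exact this
  have e2 : Qx * Qy = c • Qy := by
    have h6 := hQy4 Qx
    rw [← hQcomm, Matrix.mul_assoc, hQy1] at h6
    rw [hc]
    exact h6
  rcases eq_or_ne c 0 with hc0 | hc0
  · rw [e1, hc0, zero_smul]
  · exfalso
    apply hne
    have hQeq : Qx = Qy := by
      ext i j
      have := congrFun (congrFun (e1.symm.trans e2) i) j
      simp only [Matrix.smul_apply, smul_eq_mul] at this
      exact mul_left_cancel₀ hc0 this
    ext1
    rw [hQx3, hQy3, hQeq]

/-- Let `G` be a finite subgroup of `GL(L) = GLₙ(ℤ)` and let `D` be the subgroup of `G`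
generated by the diagonalizable reflections in `G`. Then `D` is normal in `G` and is an
elementary abelian `2`-group of rank `r`, the number of diagonalizable reflections in `G`. -/
theorem diagonalizable_reflections_subgroup (n : ℕ) (G : Subgroup (GL (Fin n) ℤ))
    (hG : Finite G) :
    (Subgroup.closure {s : G | IsDiagRefl n (s : GL (Fin n) ℤ)}).Normal ∧
    Nonempty ((Subgroup.closure {s : G | IsDiagRefl n (s : GL (Fin n) ℤ)}) ≃*
      Multiplicative (Fin (Nat.card {s : G | IsDiagRefl n (s : GL (Fin n) ℤ)}) → ZMod 2)) := by
  haveI := hG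
  set S : Set G := {s : G | IsDiagRefl n (s : GL (Fin n) ℤ)} with hSdef
  -- squares of elements of S are 1 (in G)
  have hsqG : ∀ a : G, IsDiagRefl n (a : GL (Fin n) ℤ) → a * a = 1 := by
    intro a ha
    obtain ⟨_, _, _, _, _, h⟩ := diagRefl_struct ha
    exact Subtype.ext (by push_cast; exact h)
  -- elements of S commute (in G)
  have hcommS : ∀ a ∈ S, ∀ b ∈ S, a * b = b * a := by
    intro a ha b hb
    have hfin : (a * b : G) ^ (Nat.card G) = 1 := pow_card_eq_one'
    have hfinGL : ((a : GL (Fin n) ℤ) * (b : GL (Fin n) ℤ)) ^ (Nat.card G) = 1 := by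
      have := congrArg (fun z : G => (z : GL (Fin n) ℤ)) hfin
      push_cast at this
      exact this
    have hc := diagRefl_commute ha hb _ Nat.card_pos hfinGL
    exact Subtype.ext (by push_cast; exact hc)
  constructor
  · -- normality
    constructor
    intro h hmem g
    induction hmem using Subgroup.closure_induction with
    | mem x hx =>
      apply Subgroup.subset_closure
      show IsDiagRefl n ((g * x * g⁻¹ : G) : GL (Fin n) ℤ)
      have hco : ((g * x * g⁻¹ : G) : GL (Fin n) ℤ)
          = (g : GL (Fin n) ℤ) * (x : GL (Fin n) ℤ) * (g : GL (Fin n) ℤ)⁻¹ := by push_cast; ring_nf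
      rw [hco]
      exact isDiagRefl_conj _ hx
    | one => simpa using Subgroup.one_mem _
    | mul x y hx hy px py =>
      have : g * (x * y) * g⁻¹ = (g * x * g⁻¹) * (g * y * g⁻¹) := by group
      rw [this]
      exact Subgroup.mul_mem _ px py
    | inv x hx px =>
      have : g * x⁻¹ * g⁻¹ = (g * x * g⁻¹)⁻¹ := by group
      rw [this]
      exact Subgroup.inv_mem _ px
  · -- the isomorphism
    haveI : Fintype ↥S := Fintype.ofFinite _
    set H := Subgroup.closure S with hH
    letI : CommGroup H := Subgroup.closureCommGroupOfComm hcommS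
    have hr : Nat.card ↥S = Fintype.card ↥S := Nat.card_eq_fintype_card
    set r := Nat.card ↥S with hrdef
    let e : Fin r ≃ ↥S := (finCongr hr).trans (Fintype.equivFin ↥S).symm
    let gens : Fin r → H := fun i => ⟨((e i : G)), Subgroup.subset_closure (e i).2⟩
    have hgen_sq : ∀ i, gens i * gens i = 1 := by
      intro i
      exact Subtype.ext (hsqG _ (e i).2)
    have hpowmod : ∀ (h : H), h * h = 1 → ∀ m : ℕ, h ^ (m % 2) = h ^ m := by
      intro h hh m
      conv_rhs => rw [← Nat.div_add_mod m 2]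
      rw [pow_add, pow_mul, show h ^ 2 = 1 from by rw [sq, hh], one_pow, one_mul]
    let F : Multiplicative (Fin r → ZMod 2) →* H :=
      { toFun := fun χ => ∏ i, gens i ^ ((Multiplicative.toAdd χ) i).val
        map_one' := by
          simp [ZMod.val_zero]
        map_mul' := by
          intro χ ψ
          simp only [toAdd_mul, Pi.add_apply]
          rw [← Finset.prod_mul_distrib]
          refine Finset.prod_congr rfl fun i _ => ?_
          rw [ZMod.val_add, hpowmod (gens i) (hgen_sq i), pow_add]
      }
    have hF_apply : ∀ χ, F χ = ∏ i, gens i ^ ((Multiplicative.toAdd χ) i).val := fun _ => rfl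
    have hF_single : ∀ j : Fin r, F (Multiplicative.ofAdd (Pi.single j 1)) = gens j := by
      intro j
      rw [hF_apply]
      rw [Finset.prod_eq_single j]
      · simp only [toAdd_ofAdd, Pi.single_eq_same]
        rw [show ZMod.val (1 : ZMod 2) = 1 from rfl, pow_one]
      · intro b _ hb
        simp only [toAdd_ofAdd, Pi.single_eq_of_ne hb]
        simp [ZMod.val_zero]
      · intro hj
        exact absurd (Finset.mem_univ j) hj
    have hFsq : ∀ χ, F χ * F χ = 1 := by
      intro χ
      rw [← F.map_mul]
      have : χ * χ = 1 := by
        apply Multiplicative.toAdd.injective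
        rw [toAdd_mul, toAdd_one]
        funext i
        simp [CharTwo.add_self_eq_zero]
      rw [this, F.map_one]
    -- surjectivity
    have hsurj : Function.Surjective F := by
      rintro ⟨g, hg⟩
      have : ∃ χ, ((F χ : H) : G) = g := by
        induction hg using Subgroup.closure_induction with
        | mem x hx =>
          refine ⟨Multiplicative.ofAdd (Pi.single (e.symm ⟨x, hx⟩) 1), ?_⟩
          rw [hF_single]
          show ((e (e.symm ⟨x, hx⟩) : G)) = x
          rw [Equiv.apply_symm_apply]
        | one => exact ⟨1, by rw [F.map_one]; rfl⟩
        | mul x y hx hy px py =>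
          obtain ⟨χ₁, h₁⟩ := px
          obtain ⟨χ₂, h₂⟩ := py
          exact ⟨χ₁ * χ₂, by rw [F.map_mul]; push_cast; rw [h₁, h₂]⟩
        | inv x hx px =>
          obtain ⟨χ, h₁⟩ := px
          refine ⟨χ, ?_⟩
          have hinv : (F χ)⁻¹ = F χ := inv_eq_of_mul_eq_one_right (hFsq χ)
          rw [← hinv]
          push_cast
          rw [h₁]
      obtain ⟨χ, hχ⟩ := this
      exact ⟨χ, Subtype.ext hχ⟩
    -- the orthogonal idempotents
    let Qf : ↥S → Matrix (Fin n) (Fin n) ℤ := fun s => (diagRefl_struct s.2).choose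
    have hQspec := fun (s : ↥S) => (diagRefl_struct s.2).choose_spec
    have hQorth : ∀ s t : ↥S, s ≠ t → Qf s * Qf t = 0 := by
      intro s t hst
      obtain ⟨h1, h2, h3, h4, h5⟩ := hQspec s
      obtain ⟨g1, g2, g3, g4, g5⟩ := hQspec t
      refine diagRefl_orth h1 h3 h4 g1 g3 g4 ?_ ?_
      · intro hh
        exact hst (Subtype.ext (Subtype.ext hh))
      · have hc := hcommS _ s.2 _ t.2
        have := congrArg (fun z : G => (z : GL (Fin n) ℤ)) hc
        push_cast at this
        exact this
    -- product formula
    have hprodmat : ∀ T : Finset (Fin r),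
        ((((∏ i ∈ T, gens i : H) : G) : GL (Fin n) ℤ) : Matrix (Fin n) (Fin n) ℤ)
          = 1 - (2:ℤ) • ∑ i ∈ T, Qf (e i) := by
      intro T
      induction T using Finset.induction_on with
      | empty => simp
      | @insert j T hj ih =>
        rw [Finset.prod_insert hj, Finset.sum_insert hj]
        have hcoe : ((((gens j * ∏ i ∈ T, gens i : H) : G) : GL (Fin n) ℤ)
            : Matrix (Fin n) (Fin n) ℤ)
            = (((gens j : G) : GL (Fin n) ℤ) : Matrix (Fin n) (Fin n) ℤ)
              * ((((∏ i ∈ T, gens i : H) : G) : GL (Fin n) ℤ) : Matrix (Fin n) (Fin n) ℤ) := by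
          simp only [Subgroup.coe_mul, Units.val_mul]
        rw [hcoe, ih]
        have hQj : (((gens j : G) : GL (Fin n) ℤ) : Matrix (Fin n) (Fin n) ℤ)
            = 1 - (2:ℤ) • Qf (e j) := (hQspec (e j)).2.2.1
        rw [hQj]
        have horthsum : Qf (e j) * ∑ i ∈ T, Qf (e i) = 0 := by
          rw [Finset.mul_sum]
          refine Finset.sum_eq_zero fun i hi => ?_
          exact hQorth _ _ (fun hh => hj (by rwa [← e.injective hh] at hi))
        simp only [mul_sub, sub_mul, one_mul, mul_one, smul_mul_assoc, mul_smul_comm,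
          smul_smul, horthsum, smul_zero]
        module
    -- injectivity
    have hinj : Function.Injective F := by
      rw [injective_iff_map_eq_one]
      intro χ hχ
      set T : Finset (Fin r) := Finset.univ.filter (fun i => (Multiplicative.toAdd χ) i = 1)
        with hT
      have hzmod : ∀ a : ZMod 2, a = 0 ∨ a = 1 := by decide
      have hFT : F χ = ∏ i ∈ T, gens i := by
        rw [hF_apply]
        rw [← Finset.prod_subset (Finset.subset_univ T)]
        · refine Finset.prod_congr rfl fun i hi => ?_
          rw [hT] at hi
          simp only [Finset.mem_filter] at hi
          rw [hi.2]
          simp [ZMod.val_one]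
        · intro i _ hi
          rw [hT] at hi
          simp only [Finset.mem_filter, Finset.mem_univ, true_and] at hi
          rcases hzmod ((Multiplicative.toAdd χ) i) with h0 | h0
          · rw [h0]; simp [ZMod.val_zero]
          · exact absurd h0 hi
      rw [hFT] at hχ
      have hmat := congrArg
        (fun z : H => (((z : G) : GL (Fin n) ℤ) : Matrix (Fin n) (Fin n) ℤ)) hχ
      rw [hprodmat T] at hmat
      have hone : ((((1 : H) : G) : GL (Fin n) ℤ) : Matrix (Fin n) (Fin n) ℤ) = 1 := by
        simp only [OneMemClass.coe_one, Units.val_one]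
      rw [hone] at hmat
      have hsum0 : ∑ i ∈ T, Qf (e i) = 0 := by
        ext i j
        have := congrFun (congrFun hmat i) j
        simp only [Matrix.sub_apply, Matrix.smul_apply, smul_eq_mul, Matrix.zero_apply] at this ⊢
        linarith
      have htr := congrArg Matrix.trace hsum0
      rw [Matrix.trace_sum, Matrix.trace_zero] at htr
      have htr2 : ∀ i ∈ T, (Qf (e i)).trace = 1 := fun i _ => (hQspec (e i)).2.1
      rw [Finset.sum_congr rfl htr2, Finset.sum_const, nsmul_eq_mul, mul_one] at htr
      have hTempty : T = ∅ := Finset.card_eq_zero.mp (by exact_mod_cast htr)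
      apply Multiplicative.toAdd.injective
      rw [toAdd_one]
      funext i
      show (Multiplicative.toAdd χ) i = 0
      rcases hzmod ((Multiplicative.toAdd χ) i) with h0 | h0
      · exact h0
      · exfalso
        have : i ∈ T := by rw [hT]; simp [h0]
        rw [hTempty] at this
        exact absurd this (Finset.notMem_empty i)
    exact ⟨(MulEquiv.ofBijective F ⟨hinj, hsurj⟩).symm⟩
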